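/- Let d ≥ 1 and k ≥ 0 be integers, let n_1,…,n_d ≥ 1, and let ω : V(K[n_1,…,n_d]) → [0,∞) be any weighting function with total weight W(ω) > 0. Then the limit superior as n → ∞ of β_k(T^(d)[n])/n^d is at most M_k(K[n_1,…,n_d],ω)/W(ω). -/

import Mathlib

open Filter Topology

/-- The `d`-dimensional kings graph on `Fin (n 0) × ⋯ × Fin (n (d-1))`:
distinct vertices are adjacent iff their coordinates differ by at most 1. -/
def kingsGraph (d : ℕ) (n : Fin d → ℕ) :
    SimpleGraph (∀ i : Fin d, Fin (n i)) where
  Adj u v := u ≠ v ∧ ∀ i, |((v i : ℤ)) - (u i : ℤ)| ≤ 1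
  symm := by
    constructor; rintro u v ⟨h1, h2⟩
    exact ⟨h1.symm, fun i => by rw [abs_sub_comm]; exact h2 i⟩
  loopless := by constructor; intro v h; exact h.1 rfl

/-- The `d`-dimensional toroidal kings graph on `ZMod (n 0) × ⋯ × ZMod (n (d-1))`:
distinct vertices are adjacent iff each coordinate difference is `-1`, `0` or `1`. -/
def torusGraph (d : ℕ) (n : Fin d → ℕ) :
    SimpleGraph (∀ i : Fin d, ZMod (n i)) where
  Adj u v := u ≠ v ∧ ∀ i, v i - u i = -1 ∨ v i - u i = 0 ∨ v i - u i = 1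
  symm := by
    constructor; rintro u v ⟨h1, h2⟩
    refine ⟨h1.symm, fun i => ?_⟩
    rcases h2 i with h | h | h
    · right; right; rw [show u i - v i = -(v i - u i) by ring, h]; norm_num
    · right; left; rw [show u i - v i = -(v i - u i) by ring, h]; norm_num
    · left; rw [show u i - v i = -(v i - u i) by ring, h]
  loopless := by constructor; intro v h; exact h.1 rfl

/-- A set `S` of vertices is `k`-dependent if every vertex of `S`
has at most `k` neighbors in `S`. -/
def IsKDependent {V : Type*} (G : SimpleGraph V) (k : ℕ) (S : Set V) : Prop :=
  ∀ v ∈ S, (S ∩ G.neighborSet v).ncard ≤ k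

/-- `betaK G k` is the maximum cardinality of a `k`-dependent set in `G`. -/
noncomputable def betaK {V : Type*} (G : SimpleGraph V) (k : ℕ) : ℕ :=
  sSup {m | ∃ S : Set V, IsKDependent G k S ∧ S.ncard = m}

/-- A set `S` of vertices is half-dependent if every vertex `v ∈ S`
has at most `|N(v)|/2` neighbors in `S`. -/
def IsHalfDependent {V : Type*} (G : SimpleGraph V) (S : Set V) : Prop :=
  ∀ v ∈ S, 2 * (S ∩ G.neighborSet v).ncard ≤ (G.neighborSet v).ncard

/-- `halfNum G` is the maximum cardinality of a half-dependent set in `G`. -/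
noncomputable def halfNum {V : Type*} (G : SimpleGraph V) : ℕ :=
  sSup {m | ∃ S : Set V, IsHalfDependent G S ∧ S.ncard = m}

/-- A graph is vertex-transitive if any vertex can be mapped to any other
by a graph automorphism. -/
def IsVertexTransitive {V : Type*} (G : SimpleGraph V) : Prop :=
  ∀ u v : V, ∃ f : G ≃g G, f u = v

/-- The window embedding: place the box at offset `t` in the torus. -/
def phiW (n : ℕ) {d : ℕ} (m : Fin d → ℕ) (t : ∀ _ : Fin d, ZMod n)
    (x : ∀ i, Fin (m i)) : ∀ _ : Fin d, ZMod n :=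
  fun i => t i + ((x i : ℕ) : ZMod n)

lemma phiW_inj {n d : ℕ} [NeZero n] {m : Fin d → ℕ} (hn : ∀ i, m i ≤ n)
    (t : ∀ _ : Fin d, ZMod n) : Function.Injective (phiW n m t) := by
  intro x y h
  funext i
  have h2 : ((x i : ℕ) : ZMod n) = ((y i : ℕ) : ZMod n) :=
    add_left_cancel (congrFun h i)
  have hx : (x i : ℕ) < n := lt_of_lt_of_le (x i).2 (hn i)
  have hy : (y i : ℕ) < n := lt_of_lt_of_le (y i).2 (hn i)
  exact Fin.ext (by rw [← ZMod.val_natCast_of_lt hx, ← ZMod.val_natCast_of_lt hy, h2])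

lemma phiW_adj {n d : ℕ} [NeZero n] {m : Fin d → ℕ} (hn : ∀ i, m i ≤ n)
    (t : ∀ _ : Fin d, ZMod n) {x y : ∀ i, Fin (m i)}
    (h : (kingsGraph d m).Adj x y) :
    (torusGraph d fun _ => n).Adj (phiW n m t x) (phiW n m t y) := by
  obtain ⟨hne, habs⟩ := h
  refine ⟨fun hc => hne (phiW_inj hn t hc), fun i => ?_⟩
  have h1 := habs i
  rw [abs_le] at h1
  have hcast : phiW n m t y i - phiW n m t x i
      = (((y i : ℤ) - (x i : ℤ) : ℤ) : ZMod n) := by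
    simp only [phiW]
    push_cast
    ring
  have hd : (y i : ℤ) - (x i : ℤ) = -1 ∨ (y i : ℤ) - (x i : ℤ) = 0 ∨
      (y i : ℤ) - (x i : ℤ) = 1 := by omega
  rcases hd with h | h | h <;> rw [hcast, h] <;> simp

lemma window_kdep {n d k : ℕ} [NeZero n] {m : Fin d → ℕ} (hn : ∀ i, m i ≤ n)
    {S : Set (∀ _ : Fin d, ZMod n)} (hS : IsKDependent (torusGraph d fun _ => n) k S)
    (t : ∀ _ : Fin d, ZMod n) :
    IsKDependent (kingsGraph d m) k {x | phiW n m t x ∈ S} := by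
  intro x hx
  refine le_trans (Set.ncard_le_ncard_of_injOn (phiW n m t) ?_ ((phiW_inj hn t).injOn) (Set.toFinite _)) (hS _ hx)
  rintro y ⟨hy1, hy2⟩
  exact ⟨hy1, phiW_adj hn t hy2⟩

lemma count_translates {n d : ℕ} [NeZero n] {m : Fin d → ℕ}
    (S : Finset (∀ _ : Fin d, ZMod n)) (x : ∀ i, Fin (m i)) :
    (Finset.univ.filter fun t : ∀ _ : Fin d, ZMod n => phiW n m t x ∈ S).card
      = S.card := by
  classical
  refine Finset.card_bij' (fun t _ => phiW n m t x)
    (fun s _ => fun i => s i - ((x i : ℕ) : ZMod n)) ?_ ?_ ?_ ?_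
  · intro t ht
    simpa using (Finset.mem_filter.mp ht).2
  · intro s hs
    simp only [Finset.mem_filter, Finset.mem_univ, true_and]
    have : phiW n m (fun i => s i - ((x i : ℕ) : ZMod n)) x = s := by
      funext i; simp [phiW]
    rw [this]; exact hs
  · intro t ht
    funext i; simp [phiW]
  · intro s hs
    funext i; simp [phiW]

lemma key_bound {d k : ℕ} (m : Fin d → ℕ) (ω : (∀ i : Fin d, Fin (m i)) → ℝ)
    (M : ℝ)
    (hMb : ∀ T : Finset (∀ i : Fin d, Fin (m i)),
      IsKDependent (kingsGraph d m) k ↑T → ∑ v ∈ T, ω v ≤ M)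
    {n : ℕ} [NeZero n] (hn : ∀ i, m i ≤ n) :
    (betaK (torusGraph d fun _ => n) k : ℝ) * (∑ v, ω v) ≤ (n : ℝ) ^ d * M := by
  classical
  set V' := ∀ _ : Fin d, ZMod n
  -- obtain an optimal k-dependent set in the torus
  have hbdd : BddAbove {m' | ∃ S : Set V',
      IsKDependent (torusGraph d fun _ => n) k S ∧ S.ncard = m'} := by
    refine ⟨Fintype.card V', ?_⟩
    rintro a ⟨S, -, rfl⟩
    calc S.ncard ≤ (Set.univ : Set V').ncard :=
          Set.ncard_le_ncard (Set.subset_univ S) Set.finite_univ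
      _ = Fintype.card V' := by rw [Set.ncard_univ, Nat.card_eq_fintype_card]
  have hne : {m' | ∃ S : Set V',
      IsKDependent (torusGraph d fun _ => n) k S ∧ S.ncard = m'}.Nonempty :=
    ⟨0, ∅, fun v hv => absurd hv (Set.notMem_empty v), Set.ncard_empty _⟩
  obtain ⟨S, hS, hcard⟩ := Nat.sSup_mem hne hbdd
  set Sf : Finset V' := S.toFinset with hSf
  have hmemSf : ∀ v, v ∈ Sf ↔ v ∈ S := fun v => Set.mem_toFinset
  have hcard' : Sf.card = betaK (torusGraph d fun _ => n) k := by
    unfold betaK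
    rw [← hcard, hSf]
    exact (Set.ncard_eq_toFinset_card' S).symm
  rw [← hcard']
  -- double counting
  calc (Sf.card : ℝ) * ∑ v, ω v
      = ∑ x : (∀ i : Fin d, Fin (m i)),
          ((Finset.univ.filter fun t : V' => phiW n m t x ∈ Sf).card : ℝ) * ω x := by
        rw [Finset.mul_sum]
        refine Finset.sum_congr rfl fun x _ => ?_
        rw [count_translates Sf x]
    _ = ∑ x, ∑ t ∈ Finset.univ.filter (fun t : V' => phiW n m t x ∈ Sf), ω x := by
        simp [Finset.sum_const, nsmul_eq_mul]
    _ = ∑ x, ∑ t : V', if phiW n m t x ∈ Sf then ω x else 0 := by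
        refine Finset.sum_congr rfl fun x _ => ?_
        rw [Finset.sum_filter]
    _ = ∑ t : V', ∑ x, if phiW n m t x ∈ Sf then ω x else 0 := Finset.sum_comm
    _ = ∑ t : V', ∑ x ∈ Finset.univ.filter (fun x => phiW n m t x ∈ Sf), ω x := by
        refine Finset.sum_congr rfl fun t _ => ?_
        rw [Finset.sum_filter]
    _ ≤ ∑ _t : V', M := by
        refine Finset.sum_le_sum fun t _ => ?_
        refine hMb _ ?_
        have hcoe : ((Finset.univ.filter fun x => phiW n m t x ∈ Sf : Finset _) : Set _)
            = {x | phiW n m t x ∈ S} := by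
          ext x; simp [hmemSf]
        rw [hcoe]
        exact window_kdep hn hS t
    _ = (n : ℝ) ^ d * M := by
        rw [Finset.sum_const, Finset.card_univ]
        have : Fintype.card V' = n ^ d := by
          simp [V', Fintype.card_pi, ZMod.card]
        rw [this]
        simp [nsmul_eq_mul]

/-- limsup of β_k(T^(d)[n])/n^d is at most M_k(K[n_1,…,n_d],ω)/W(ω). -/
theorem stmt_15 (d : ℕ) (hd : 1 ≤ d) (k : ℕ)
    (m : Fin d → ℕ) (hm : ∀ i, 1 ≤ m i)
    (ω : (∀ i : Fin d, Fin (m i)) → ℝ) (hω : ∀ v, 0 ≤ ω v)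
    (W : ℝ) (hW : W = ∑ v, ω v) (hWpos : 0 < W)
    (M : ℝ)
    (hM : M = sSup {x : ℝ |
        ∃ S : Finset (∀ i : Fin d, Fin (m i)),
          IsKDependent (kingsGraph d m) k ↑S ∧ ∑ v ∈ S, ω v = x}) :
    Filter.limsup
      (fun n : ℕ => (betaK (torusGraph d (fun _ => n)) k : ℝ) / (n : ℝ) ^ d)
      Filter.atTop ≤ M / W := by
  classical
  -- M is an upper bound on weights of k-dependent sets
  have hMb : ∀ T : Finset (∀ i : Fin d, Fin (m i)),
      IsKDependent (kingsGraph d m) k ↑T → ∑ v ∈ T, ω v ≤ M := by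
    intro T hT
    rw [hM]
    refine le_csSup ?_ ⟨T, hT, rfl⟩
    have hsub : {x : ℝ | ∃ S : Finset (∀ i : Fin d, Fin (m i)),
        IsKDependent (kingsGraph d m) k ↑S ∧ ∑ v ∈ S, ω v = x}
        ⊆ Set.range (fun S : Finset (∀ i : Fin d, Fin (m i)) => ∑ v ∈ S, ω v) := by
      rintro x ⟨S, -, rfl⟩; exact ⟨S, rfl⟩
    exact ((Set.finite_range _).subset hsub).bddAbove
  have hcob : Filter.IsCoboundedUnder (· ≤ ·) Filter.atTop
      (fun n : ℕ => (betaK (torusGraph d (fun _ => n)) k : ℝ) / (n : ℝ) ^ d) :=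
    Filter.isCoboundedUnder_le_of_le Filter.atTop (x := 0) fun n =>
      div_nonneg (Nat.cast_nonneg _) (by positivity)
  refine Filter.limsup_le_of_le hcob ?_
  filter_upwards [Filter.eventually_ge_atTop (Finset.univ.sup m + 1)] with n hn
  haveI : NeZero n := ⟨by omega⟩
  have hn' : ∀ i, m i ≤ n :=
    fun i => le_trans (Finset.le_sup (Finset.mem_univ i)) (by omega)
  have hnpos : (0 : ℝ) < (n : ℝ) ^ d := by
    have : 0 < n := by omega
    positivity
  rw [div_le_div_iff₀ hnpos hWpos]
  have := key_bound m ω M hMb hn'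
  rw [← hW] at this
  linarith
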